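/- arXiv:2109.03663 — 3 statements merged into one kernel-verified Lean document; each statement's English description precedes it below -/
import Mathlib

section
/- Let h ∈ ℂ^M and H ∈ ℂ^{M×N} with Hᴴh ≠ 0. Let λ_1,…,λ_N ≥ 0 be the eigenvalues of HᴴH with corresponding orthonormal eigenvectors u_1,…,u_N ∈ ℂ^N. Suppose γ* ∈ ℝ satisfies γ* > max_d λ_d and ∑_{d=1}^N |u_dᴴ Hᴴ h|²/(γ* − λ_d)² = N. Define φ* = ∑_{d=1}^N (u_dᴴ Hᴴ h)/(γ* − λ_d) · u_d. Then ‖φ*‖² = N, and for every φ ∈ ℂ^N with ‖φ‖² ≤ N one has ‖h + Hφ‖² ≤ ‖h + Hφ*‖²; i.e., φ* is a global maximizer of ‖h + Hφ‖² over the ball {φ : ‖φ‖² ≤ N}. -/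
open Matrix

noncomputable def enormSq {n : ℕ} (v : Fin n → ℂ) : ℝ := ∑ i, ‖v i‖ ^ 2

noncomputable def cinner {n : ℕ} (u v : Fin n → ℂ) : ℂ :=
  ∑ j, (starRingEnd ℂ) (u j) * v j

lemma cinner_eq_dot {n : ℕ} (u v : Fin n → ℂ) : cinner u v = star u ⬝ᵥ v := rfl

lemma cinner_adj {m n : ℕ} (A : Matrix (Fin m) (Fin n) ℂ) (x : Fin m → ℂ) (y : Fin n → ℂ) :
    cinner x (A.mulVec y) = cinner (Aᴴ.mulVec x) y := by
  rw [cinner_eq_dot, cinner_eq_dot, dotProduct_mulVec, star_mulVec, conjTranspose_conjTranspose]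

lemma cinner_smul_right {n : ℕ} (x y : Fin n → ℂ) (a : ℂ) :
    cinner x (a • y) = a * cinner x y := by
  simp only [cinner, Finset.mul_sum, Pi.smul_apply, smul_eq_mul, _root_.map_mul]
  exact Finset.sum_congr rfl fun i _ => by ring

lemma cinner_smul_left {n : ℕ} (x y : Fin n → ℂ) (a : ℂ) :
    cinner (a • x) y = (starRingEnd ℂ) a * cinner x y := by
  simp only [cinner, Finset.mul_sum, Pi.smul_apply, smul_eq_mul, _root_.map_mul]
  exact Finset.sum_congr rfl fun i _ => by ring

lemma cinner_add_right {n : ℕ} (x y z : Fin n → ℂ) :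
    cinner x (y + z) = cinner x y + cinner x z := by
  simp [cinner, mul_add, Finset.sum_add_distrib]

lemma cinner_add_left {n : ℕ} (x y z : Fin n → ℂ) :
    cinner (x + y) z = cinner x z + cinner y z := by
  simp [cinner, add_mul, Finset.sum_add_distrib]

lemma cinner_sum_right {n : ℕ} (x : Fin n → ℂ) {ι : Type*} (s : Finset ι) (f : ι → Fin n → ℂ) :
    cinner x (∑ i ∈ s, f i) = ∑ i ∈ s, cinner x (f i) := by
  simp only [cinner, Finset.sum_apply, Finset.mul_sum]
  exact Finset.sum_comm

lemma cinner_sum_left {n : ℕ} (x : Fin n → ℂ) {ι : Type*} (s : Finset ι) (f : ι → Fin n → ℂ) :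
    cinner (∑ i ∈ s, f i) x = ∑ i ∈ s, cinner (f i) x := by
  simp only [cinner, Finset.sum_apply, map_sum, Finset.sum_mul]
  exact Finset.sum_comm

lemma cinner_conj {n : ℕ} (x y : Fin n → ℂ) :
    (starRingEnd ℂ) (cinner x y) = cinner y x := by
  simp [cinner, map_sum, mul_comm]

lemma cinner_self {n : ℕ} (x : Fin n → ℂ) : cinner x x = ((enormSq x : ℝ) : ℂ) := by
  simp [cinner, enormSq, Complex.conj_mul', Complex.ofReal_sum]

lemma expansion {N : ℕ} (u : Fin N → Fin N → ℂ)
    (horth : ∀ d d', cinner (u d) (u d') = if d = d' then 1 else 0)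
    (ψ : Fin N → ℂ) : ψ = ∑ d, cinner (u d) ψ • u d := by
  rcases Nat.eq_zero_or_pos N with h0 | hN
  · subst h0; funext i; exact i.elim0
  have : Nonempty (Fin N) := ⟨⟨0, hN⟩⟩
  let u' : Fin N → EuclideanSpace ℂ (Fin N) := fun d => (WithLp.equiv 2 _).symm (u d)
  have hinner : ∀ (x y : Fin N → ℂ),
      (inner ℂ ((WithLp.equiv 2 (Fin N → ℂ)).symm x) ((WithLp.equiv 2 (Fin N → ℂ)).symm y) : ℂ)
        = cinner x y := by
    intro x y
    simp [PiLp.inner_apply, RCLike.inner_apply, cinner, mul_comm]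
  have hon : Orthonormal ℂ u' := by
    rw [orthonormal_iff_ite]
    intro i j
    rw [hinner]; exact horth i j
  have hcard : Fintype.card (Fin N) = Module.finrank ℂ (EuclideanSpace ℂ (Fin N)) := by
    simp
  let b : OrthonormalBasis (Fin N) ℂ (EuclideanSpace ℂ (Fin N)) :=
    (basisOfOrthonormalOfCardEqFinrank hon hcard).toOrthonormalBasis
      (by rwa [coe_basisOfOrthonormalOfCardEqFinrank])
  have hb : ⇑b = u' := by
    simp [b, Module.Basis.coe_toOrthonormalBasis, coe_basisOfOrthonormalOfCardEqFinrank]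
  have key := b.sum_repr' ((WithLp.equiv 2 (Fin N → ℂ)).symm ψ)
  rw [hb] at key
  simp only [u', hinner] at key
  have e := congrArg (WithLp.equiv 2 (Fin N → ℂ)) key.symm
  simpa [WithLp.ofLp_sum, WithLp.ofLp_smul] using e

lemma pointwise (lam γ : ℝ) (hg : lam < γ) (cc z : ℂ) :
    2 * ((starRingEnd ℂ) cc * z).re + lam * ‖z‖ ^ 2
      = γ * ‖z‖ ^ 2 - (γ - lam) * ‖z - cc / ((γ - lam : ℝ) : ℂ)‖ ^ 2 + ‖cc‖ ^ 2 / (γ - lam) := by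
  have hgpos : (0:ℝ) < γ - lam := sub_pos.2 hg
  have hn : ∀ w : ℂ, ‖w‖ ^ 2 = w.re ^ 2 + w.im ^ 2 := fun w => by
    rw [Complex.sq_norm, Complex.normSq_apply]; ring
  simp only [hn, Complex.sub_re, Complex.sub_im, Complex.mul_re, Complex.mul_im,
    Complex.conj_re, Complex.conj_im, Complex.div_ofReal_re, Complex.div_ofReal_im]
  field_simp
  ring

/-- the eigendecomposition-based vector `φ*` with secular-equation
multiplier `γ* > max_d λ_d` has `‖φ*‖² = N` and globally maximizes `‖h + Hφ‖²`
over the ball `‖φ‖² ≤ N`. -/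
theorem stmt_1 (M N : ℕ)
    (h : Fin M → ℂ) (H : Matrix (Fin M) (Fin N) ℂ)
    (hne : Hᴴ.mulVec h ≠ 0)
    (lam : Fin N → ℝ) (u : Fin N → Fin N → ℂ)
    (hlam_nonneg : ∀ d, 0 ≤ lam d)
    (heig : ∀ d, (Hᴴ * H).mulVec (u d) = (lam d : ℂ) • u d)
    (horth : ∀ d d', cinner (u d) (u d') = if d = d' then 1 else 0)
    (γ : ℝ) (hγ : ∀ d, lam d < γ)
    (hsec : ∑ d, ‖cinner (u d) (Hᴴ.mulVec h)‖ ^ 2 / (γ - lam d) ^ 2 = (N : ℝ))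
    (φstar : Fin N → ℂ)
    (hφ : φstar = ∑ d, (cinner (u d) (Hᴴ.mulVec h) / ((γ - lam d : ℝ) : ℂ)) • u d) :
    enormSq φstar = (N : ℝ) ∧
    ∀ φ : Fin N → ℂ, enormSq φ ≤ (N : ℝ) →
      enormSq (h + H.mulVec φ) ≤ enormSq (h + H.mulVec φstar) := by
  have hNpos : 0 < N := by
    rcases Nat.eq_zero_or_pos N with h0 | h'
    · exfalso; apply hne; subst h0; funext i; exact i.elim0
    · exact h'
  set c : Fin N → ℂ := fun d => cinner (u d) (Hᴴ.mulVec h) with hc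
  have hgd : ∀ d, 0 < γ - lam d := fun d => sub_pos.2 (hγ d)
  have hγpos : 0 < γ := lt_of_le_of_lt (hlam_nonneg ⟨0, hNpos⟩) (hγ ⟨0, hNpos⟩)
  -- coefficient extraction
  have hcoef : ∀ (w : Fin N → ℂ) (d : Fin N), cinner (u d) (∑ e, w e • u e) = w d := by
    intro w d
    rw [cinner_sum_right]
    simp [cinner_smul_right, horth]
  -- Parseval
  have hpars : ∀ ψ : Fin N → ℂ, enormSq ψ = ∑ d, ‖cinner (u d) ψ‖ ^ 2 := by
    intro ψ
    have e1 : cinner ψ ψ = ∑ d, ((‖cinner (u d) ψ‖ ^ 2 : ℝ) : ℂ) := by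
      conv_lhs => rw [expansion u horth ψ]
      rw [cinner_sum_left]
      refine Finset.sum_congr rfl fun d _ => ?_
      rw [cinner_smul_left, hcoef, Complex.conj_mul']
      norm_cast
    rw [cinner_self, ← Complex.ofReal_sum] at e1
    exact_mod_cast e1
  -- coefficients of φstar
  have hzs : ∀ d, cinner (u d) φstar = c d / ((γ - lam d : ℝ) : ℂ) := by
    intro d; rw [hφ]; exact hcoef _ d
  -- norm of coefficients
  have hnzs : ∀ d, ‖cinner (u d) φstar‖ ^ 2 = ‖c d‖ ^ 2 / (γ - lam d) ^ 2 := by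
    intro d
    rw [hzs, norm_div, div_pow, Complex.norm_real, Real.norm_eq_abs,
      abs_of_pos (hgd d)]
  have h1 : enormSq φstar = (N : ℝ) := by
    rw [hpars, ← hsec]
    exact Finset.sum_congr rfl fun d _ => hnzs d
  refine ⟨h1, ?_⟩
  -- eigen coefficient relation
  have heigc : ∀ (d : Fin N) (ψ : Fin N → ℂ),
      cinner (u d) ((Hᴴ * H).mulVec ψ) = (lam d : ℂ) * cinner (u d) ψ := by
    intro d ψ
    rw [cinner_adj, conjTranspose_mul, conjTranspose_conjTranspose, heig d,
      cinner_smul_left, Complex.conj_ofReal]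
  -- objective expansion
  have hobj : ∀ φ : Fin N → ℂ, enormSq (h + H.mulVec φ)
      = enormSq h + ∑ d, (2 * ((starRingEnd ℂ) (c d) * cinner (u d) φ).re
        + lam d * ‖cinner (u d) φ‖ ^ 2) := by
    intro φ
    have hT : cinner h (H.mulVec φ) = ∑ d, (starRingEnd ℂ) (c d) * cinner (u d) φ := by
      rw [cinner_adj]
      conv_lhs => rw [expansion u horth (Hᴴ.mulVec h)]
      rw [cinner_sum_left]
      exact Finset.sum_congr rfl fun d _ => by rw [cinner_smul_left]
    have hQ : cinner (H.mulVec φ) (H.mulVec φ)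
        = ∑ d, ((lam d * ‖cinner (u d) φ‖ ^ 2 : ℝ) : ℂ) := by
      rw [cinner_adj, mulVec_mulVec]
      rw [← cinner_conj]
      conv_lhs => rw [expansion u horth φ]
      rw [cinner_sum_left, map_sum]
      refine Finset.sum_congr rfl fun d _ => ?_
      rw [cinner_smul_left, heigc, hcoef]
      have hzz : (starRingEnd ℂ) (cinner (u d) φ) * cinner (u d) φ
          = ((‖cinner (u d) φ‖ ^ 2 : ℝ) : ℂ) := by
        rw [Complex.conj_mul']; norm_cast
      rw [_root_.map_mul, _root_.map_mul, Complex.conj_conj, Complex.conj_ofReal]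
      rw [show cinner (u d) φ * ((lam d : ℂ) * (starRingEnd ℂ) (cinner (u d) φ))
          = (lam d : ℂ) * ((starRingEnd ℂ) (cinner (u d) φ) * cinner (u d) φ) from by ring, hzz]
      push_cast
      ring
    have e1 : cinner (h + H.mulVec φ) (h + H.mulVec φ)
        = cinner h h + cinner h (H.mulVec φ) + (starRingEnd ℂ) (cinner h (H.mulVec φ))
          + cinner (H.mulVec φ) (H.mulVec φ) := by
      rw [cinner_add_left, cinner_add_right, cinner_add_right, cinner_conj]
      ring
    have e2 := congrArg Complex.re e1
    rw [cinner_self] at e2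
    rw [show enormSq (h + H.mulVec φ) = (((enormSq (h + H.mulVec φ) : ℝ) : ℂ)).re from
      (Complex.ofReal_re _).symm, e2, hT, hQ]
    simp only [Complex.add_re, Complex.ofReal_re, Complex.re_sum, Complex.conj_re,
      cinner_self h]
    rw [Finset.sum_add_distrib, ← Finset.mul_sum]
    ring
  intro φ hφle
  have hzsum : ∑ d, ‖cinner (u d) φ‖ ^ 2 ≤ (N : ℝ) := by rw [← hpars]; exact hφle
  have hrw : ∀ (ψ : Fin N → ℂ),
      ∑ d, (2 * ((starRingEnd ℂ) (c d) * cinner (u d) ψ).re + lam d * ‖cinner (u d) ψ‖ ^ 2)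
      = γ * (∑ d, ‖cinner (u d) ψ‖ ^ 2)
        - (∑ d, (γ - lam d) * ‖cinner (u d) ψ - c d / ((γ - lam d : ℝ) : ℂ)‖ ^ 2)
        + ∑ d, ‖c d‖ ^ 2 / (γ - lam d) := by
    intro ψ
    rw [Finset.mul_sum, ← Finset.sum_sub_distrib, ← Finset.sum_add_distrib]
    exact Finset.sum_congr rfl fun d _ => pointwise (lam d) γ (hγ d) (c d) _
  have hfs : enormSq (h + H.mulVec φstar)
      = enormSq h + γ * (N : ℝ) + ∑ d, ‖c d‖ ^ 2 / (γ - lam d) := by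
    rw [hobj φstar, hrw φstar]
    have hz0 : ∀ d : Fin N, cinner (u d) φstar - c d / ((γ - lam d : ℝ) : ℂ) = 0 := by
      intro d; rw [hzs]; ring
    have : (∑ d, (γ - lam d) * ‖cinner (u d) φstar - c d / ((γ - lam d : ℝ) : ℂ)‖ ^ 2) = 0 := by
      refine Finset.sum_eq_zero fun d _ => ?_
      rw [hz0 d]; simp
    rw [this, ← hpars φstar, h1]
    ring
  rw [hobj φ, hrw φ, hfs]
  have hsub : 0 ≤ ∑ d, (γ - lam d) * ‖cinner (u d) φ - c d / ((γ - lam d : ℝ) : ℂ)‖ ^ 2 :=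
    Finset.sum_nonneg fun d _ => mul_nonneg (le_of_lt (hgd d)) (sq_nonneg _)
  have hγz : γ * (∑ d, ‖cinner (u d) φ‖ ^ 2) ≤ γ * (N : ℝ) :=
    mul_le_mul_of_nonneg_left hzsum (le_of_lt hγpos)
  linarith
end

section
/- Let h ∈ ℂ^M, H ∈ ℂ^{M×N}, let λ_1,…,λ_N ≥ 0 be the eigenvalues of HᴴH with orthonormal eigenvectors u_1,…,u_N, set λ_max = max_d λ_d, and define g(γ) = ∑_{d=1}^N |u_dᴴ Hᴴ h|²/(γ − λ_d)² for γ > λ_max. Assume there exists an index d̄ with λ_{d̄} = λ_max and u_{d̄}ᴴ Hᴴ h ≠ 0. Then g(γ) → ∞ as γ → λ_max from above, and for every real N' > 0 there exists a unique γ* ∈ (λ_max, ∞) with g(γ*) = N'. -/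
open Matrix

/-- if some eigenvector attaining the top eigenvalue `λ_max`
satisfies `u_d̄ᴴ Hᴴ h ≠ 0`, then the secular function `g` blows up as
`γ → λ_max⁺`, and for every `N' > 0` there is a unique root
`γ* ∈ (λ_max, ∞)` of `g(γ*) = N'`. -/
theorem stmt_5 (M N : ℕ) (h : Fin M → ℂ) (H : Matrix (Fin M) (Fin N) ℂ)
    (lam : Fin N → ℝ) (u : Fin N → Fin N → ℂ)
    (hlam_nonneg : ∀ d, 0 ≤ lam d)
    (heig : ∀ d, (Hᴴ * H).mulVec (u d) = (lam d : ℂ) • u d)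
    (horth : ∀ d d', cinner (u d) (u d') = if d = d' then 1 else 0)
    (lamMax : ℝ) (hub : ∀ d, lam d ≤ lamMax) (hmem : ∃ d, lam d = lamMax)
    (hdom : ∃ dbar, lam dbar = lamMax ∧ cinner (u dbar) (Hᴴ.mulVec h) ≠ 0)
    (g : ℝ → ℝ)
    (hg : ∀ γ, g γ = ∑ d, ‖cinner (u d) (Hᴴ.mulVec h)‖ ^ 2 / (γ - lam d) ^ 2) :
    Filter.Tendsto g (nhdsWithin lamMax (Set.Ioi lamMax)) Filter.atTop ∧
    ∀ N' : ℝ, 0 < N' → ∃! γ : ℝ, γ ∈ Set.Ioi lamMax ∧ g γ = N' := by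
  obtain ⟨dbar, hdb, hne⟩ := hdom
  set c : Fin N → ℝ := fun d => ‖cinner (u d) (Hᴴ.mulVec h)‖ ^ 2 with hcdef
  have hcnn : ∀ d, 0 ≤ c d := fun d => sq_nonneg _
  have hcpos : 0 < c dbar := pow_pos (norm_pos_iff.mpr hne) 2
  -- blow up at lamMax⁺
  have hblow : Filter.Tendsto g (nhdsWithin lamMax (Set.Ioi lamMax)) Filter.atTop := by
    have haux : Filter.Tendsto (fun γ : ℝ => c dbar / (γ - lamMax) ^ 2)
        (nhdsWithin lamMax (Set.Ioi lamMax)) Filter.atTop := by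
      have h1 : Filter.Tendsto (fun γ : ℝ => (γ - lamMax) ^ 2)
          (nhdsWithin lamMax (Set.Ioi lamMax)) (nhdsWithin 0 (Set.Ioi 0)) := by
        rw [tendsto_nhdsWithin_iff]
        constructor
        · have hc : Continuous (fun γ : ℝ => (γ - lamMax) ^ 2) := by fun_prop
          have h0 : Filter.Tendsto (fun γ : ℝ => (γ - lamMax) ^ 2) (nhds lamMax) (nhds 0) := by
            simpa using hc.tendsto lamMax
          exact h0.mono_left nhdsWithin_le_nhds
        · filter_upwards [self_mem_nhdsWithin] with γ hγ
          have : 0 < γ - lamMax := sub_pos.2 hγ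
          exact pow_pos this 2
      have h2 : Filter.Tendsto (fun γ : ℝ => ((γ - lamMax) ^ 2)⁻¹)
          (nhdsWithin lamMax (Set.Ioi lamMax)) Filter.atTop :=
        tendsto_inv_nhdsGT_zero.comp h1
      have := Filter.Tendsto.const_mul_atTop hcpos h2
      simpa [div_eq_mul_inv] using this
    refine Filter.tendsto_atTop_mono' _ ?_ haux
    filter_upwards [self_mem_nhdsWithin] with γ hγ
    rw [hg]
    have hbound : c dbar / (γ - lamMax) ^ 2 = c dbar / (γ - lam dbar) ^ 2 := by rw [hdb]
    rw [hbound]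
    exact Finset.single_le_sum (f := fun d => c d / (γ - lam d) ^ 2)
      (fun d _ => div_nonneg (hcnn d) (sq_nonneg _)) (Finset.mem_univ dbar)
  refine ⟨hblow, ?_⟩
  -- strict antitone on Ioi
  have hanti : StrictAntiOn g (Set.Ioi lamMax) := by
    intro γ1 hγ1 γ2 hγ2 hlt
    rw [hg, hg]
    apply Finset.sum_lt_sum
    · intro d _
      have h1 : 0 < γ1 - lam d := sub_pos.2 (lt_of_le_of_lt (hub d) hγ1)
      have h2 : (γ1 - lam d) ^ 2 ≤ (γ2 - lam d) ^ 2 := by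
        apply pow_le_pow_left₀ h1.le (by linarith) 2
      exact div_le_div_of_nonneg_left (hcnn d) (pow_pos h1 2) h2
    · refine ⟨dbar, Finset.mem_univ _, ?_⟩
      have h1 : 0 < γ1 - lam dbar := sub_pos.2 (lt_of_le_of_lt (hub dbar) hγ1)
      have h2 : (γ1 - lam dbar) ^ 2 < (γ2 - lam dbar) ^ 2 := by
        apply pow_lt_pow_left₀ (by linarith) h1.le (by norm_num)
      exact div_lt_div_of_pos_left hcpos (pow_pos h1 2) h2
  -- tendsto 0 at atTop
  have htop : Filter.Tendsto g Filter.atTop (nhds 0) := by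
    have hfun : g = fun γ => ∑ d, c d / (γ - lam d) ^ 2 := funext hg
    rw [hfun]
    have : Filter.Tendsto (fun γ : ℝ => ∑ d, c d / (γ - lam d) ^ 2)
        Filter.atTop (nhds (∑ d : Fin N, (0 : ℝ))) := by
      apply tendsto_finset_sum
      intro d _
      have hden : Filter.Tendsto (fun γ : ℝ => (γ - lam d) ^ 2) Filter.atTop Filter.atTop := by
        exact (Filter.tendsto_pow_atTop (two_ne_zero)).comp
          (Filter.tendsto_atTop_add_const_right _ (-lam d) Filter.tendsto_id)
      exact Filter.Tendsto.div_atTop tendsto_const_nhds hden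
    simpa using this
  intro N' hN'
  -- find γ1 with g γ1 > N'
  obtain ⟨γ1, hγ1, hγ1mem⟩ :=
    ((hblow.eventually (Filter.eventually_gt_atTop N')).and (eventually_mem_nhdsWithin)).exists
  -- find γ2 > γ1 with g γ2 < N'
  obtain ⟨γ2, hγ2lt, hγ2gt⟩ :=
    ((htop.eventually_lt_const hN').and (Filter.eventually_gt_atTop γ1)).exists
  have hγ1m : lamMax < γ1 := hγ1mem
  have hsub : Set.Icc γ1 γ2 ⊆ Set.Ioi lamMax := fun x hx => lt_of_lt_of_le hγ1m hx.1
  have hcont : ContinuousOn g (Set.Icc γ1 γ2) := by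
    have hfun : g = fun γ => ∑ d, c d / (γ - lam d) ^ 2 := funext hg
    rw [hfun]
    apply continuousOn_finset_sum _
    intro d _
    apply ContinuousOn.div continuousOn_const
      ((continuousOn_id.sub continuousOn_const).pow 2)
    intro x hx
    have : 0 < x - lam d := sub_pos.2 (lt_of_le_of_lt (hub d) (hsub hx))
    exact pow_ne_zero 2 this.ne'
  have hivt := intermediate_value_Icc' (le_of_lt hγ2gt) hcont
  have hN'mem : N' ∈ Set.Icc (g γ2) (g γ1) := ⟨hγ2lt.le, hγ1.le⟩
  obtain ⟨γs, hγsmem, hγseq⟩ := hivt hN'mem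
  refine ⟨γs, ⟨hsub hγsmem, hγseq⟩, ?_⟩
  intro γ' ⟨hγ'mem, hγ'eq⟩
  exact hanti.injOn hγ'mem (hsub hγsmem) (by rw [hγ'eq, hγseq])
end

section
/- Let K ≥ 1, p_max > 0, and let a_{ki} ≥ 0, b_k > 0, c_k > 0 (k, i ∈ {1,…,K}) be real constants with a_{kk} ≥ b_k for every k. Define SINR_k(p) = b_k p_k/(∑_i a_{ki} p_i − b_k p_k + c_k) and I_k(p) = (∑_i a_{ki} p_i − b_k p_k + c_k)/b_k for p ∈ ℝ^K, p ≥ 0. Consider the fixed-point iteration: given p^{(n)}, set q_k = I_k(p^{(n)}) for each k, and p^{(n+1)} = (p_max / max_k q_k) · q. Then for any initial point p^{(0)} with 0 < p^{(0)}_k for all k, the sequence (p^{(n)}) converges to a point p* with 0 ≤ p* ≤ p_max componentwise, and p* is an optimal solution of the max-min fairness problem: min_{k} SINR_k(p*) ≥ min_k SINR_k(p) for every p ∈ ℝ^K with 0 ≤ p ≤ p_max componentwise. -/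
open Filter

set_option maxHeartbeats 1000000

/-- Finite suprema of real-valued sequences pass to the limit. -/
private lemma aux_tendsto_ciSup {ι : Type*} [Fintype ι] [Nonempty ι]
    (f : ℕ → ι → ℝ) (g : ι → ℝ)
    (h : ∀ j, Tendsto (fun n => f n j) atTop (nhds (g j))) :
    Tendsto (fun n => ⨆ j, f n j) atTop (nhds (⨆ j, g j)) := by
  rw [Metric.tendsto_atTop]
  intro ε hε
  have hε2 : 0 < ε / 2 := by linarith
  have H : ∀ j, ∃ N, ∀ n ≥ N, dist (f n j) (g j) < ε / 2 :=
    fun j => Metric.tendsto_atTop.mp (h j) _ hε2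
  choose N hN using H
  obtain ⟨M, hM⟩ := Finite.exists_le N
  refine ⟨M, fun n hn => ?_⟩
  have hb1 : ∀ j, |f n j - g j| < ε / 2 := fun j => by
    rw [← Real.dist_eq]; exact hN j n (le_trans (hM j) hn)
  rw [Real.dist_eq]
  have h1 : (⨆ j, f n j) ≤ (⨆ j, g j) + ε / 2 :=
    ciSup_le fun j => le_trans (b := g j + ε / 2) (by linarith [(abs_lt.mp (hb1 j)).2])
      (add_le_add_left (le_ciSup (Finite.bddAbove_range g) j) _)
  have h2 : (⨆ j, g j) ≤ (⨆ j, f n j) + ε / 2 :=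
    ciSup_le fun j => le_trans (b := f n j + ε / 2) (by linarith [(abs_lt.mp (hb1 j)).1])
      (add_le_add_left (le_ciSup (Finite.bddAbove_range fun j => f n j) j) _)
  rw [abs_sub_lt_iff]
  constructor <;> linarith

/-- the normalized fixed-point power-control iteration
`p^{(n+1)} = (p_max / max_k I_k(p^{(n)})) · I(p^{(n)})` converges, from any
strictly positive initial point, to a feasible power vector `p*` that solves
the max-min fairness problem
`maximize min_k SINR_k(p)` subject to `0 ≤ p ≤ p_max`. -/
theorem stmt_15 (K : ℕ) (hK : 1 ≤ K) (pmax : ℝ) (hpmax : 0 < pmax)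
    (a : Fin K → Fin K → ℝ) (b c : Fin K → ℝ)
    (ha : ∀ k i, 0 ≤ a k i) (hb : ∀ k, 0 < b k) (hc : ∀ k, 0 < c k)
    (hdiag : ∀ k, b k ≤ a k k)
    (SINR : (Fin K → ℝ) → Fin K → ℝ)
    (hS : ∀ p k, SINR p k = b k * p k / ((∑ i, a k i * p i) - b k * p k + c k))
    (I : (Fin K → ℝ) → Fin K → ℝ)
    (hI : ∀ p k, I p k = ((∑ i, a k i * p i) - b k * p k + c k) / b k)
    (p : ℕ → Fin K → ℝ) (hp0 : ∀ k, 0 < p 0 k)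
    (hrec : ∀ n k, p (n + 1) k = (pmax / (⨆ j, I (p n) j)) * I (p n) k) :
    ∃ pstar : Fin K → ℝ,
      (∀ k, Filter.Tendsto (fun n => p n k) Filter.atTop (nhds (pstar k))) ∧
      (∀ k, 0 ≤ pstar k ∧ pstar k ≤ pmax) ∧
      (∀ q : Fin K → ℝ, (∀ k, 0 ≤ q k ∧ q k ≤ pmax) →
        (⨅ k, SINR q k) ≤ ⨅ k, SINR pstar k) := by
  haveI : Nonempty (Fin K) := ⟨⟨0, hK⟩⟩
  classical
  -- coefficient form of the interference map
  set coef : Fin K → Fin K → ℝ := fun k i => a k i - if i = k then b k else 0 with hcoefdef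
  have hcoef0 : ∀ k i, 0 ≤ coef k i := by
    intro k i
    simp only [hcoefdef]
    by_cases h : i = k
    · subst h; simp [sub_nonneg, hdiag i]
    · simp [h, ha k i]
  have hGI : ∀ (x : Fin K → ℝ) k, I x k = ((∑ i, coef k i * x i) + c k) / b k := by
    intro x k
    rw [hI]
    congr 1
    have : (∑ i, coef k i * x i) = (∑ i, a k i * x i) - b k * x k := by
      simp only [hcoefdef, sub_mul, Finset.sum_sub_distrib]
      congr 1
      simp only [ite_mul, zero_mul]
      rw [Finset.sum_ite_eq' Finset.univ k (fun i => b k * x i)]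
      simp
    rw [this]
  have hGnonneg : ∀ k (x : Fin K → ℝ), (∀ i, 0 ≤ x i) → 0 ≤ ∑ i, coef k i * x i :=
    fun k x hx => Finset.sum_nonneg fun i _ => mul_nonneg (hcoef0 k i) (hx i)
  have hGmono : ∀ k (x y : Fin K → ℝ) (t : ℝ), (∀ i, x i ≤ t * y i) →
      (∑ i, coef k i * x i) ≤ t * ∑ i, coef k i * y i := by
    intro k x y t hxy
    rw [Finset.mul_sum]
    refine Finset.sum_le_sum fun i _ => ?_
    calc coef k i * x i ≤ coef k i * (t * y i) :=
          mul_le_mul_of_nonneg_left (hxy i) (hcoef0 k i)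
      _ = t * (coef k i * y i) := by ring
  -- uniform bounds and the contraction constant
  set Cb : ℝ := ∑ k, ∑ i, coef k i * pmax with hCbdef
  have hCb0 : 0 ≤ Cb :=
    Finset.sum_nonneg fun k _ => Finset.sum_nonneg fun i _ =>
      mul_nonneg (hcoef0 k i) hpmax.le
  have hGle : ∀ k (x : Fin K → ℝ), (∀ i, 0 ≤ x i) → (∀ i, x i ≤ pmax) →
      (∑ i, coef k i * x i) ≤ Cb := by
    intro k x hx0 hx1
    calc (∑ i, coef k i * x i) ≤ ∑ i, coef k i * pmax :=
          Finset.sum_le_sum fun i _ => mul_le_mul_of_nonneg_left (hx1 i) (hcoef0 k i)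
      _ ≤ Cb := by
          refine Finset.single_le_sum (f := fun k => ∑ i, coef k i * pmax)
            (fun j _ => Finset.sum_nonneg fun i _ => mul_nonneg (hcoef0 j i) hpmax.le)
            (Finset.mem_univ k)
  set cmin : ℝ := ⨅ k, c k with hcmindef
  have hcminle : ∀ k, cmin ≤ c k := fun k => ciInf_le (Finite.bddBelow_range c) k
  have hcminpos : 0 < cmin := by
    obtain ⟨k, hk⟩ := exists_eq_ciInf_of_finite (f := c)
    rw [hcmindef, ← hk]; exact hc k
  set θ : ℝ := Cb / (Cb + cmin) with hθdef
  have hdenpos : 0 < Cb + cmin := by linarith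
  have hθ0 : 0 ≤ θ := div_nonneg hCb0 hdenpos.le
  have hθ1 : θ < 1 := by
    rw [hθdef, div_lt_one hdenpos]; linarith
  -- key contraction inequality
  have key : ∀ (x y : Fin K → ℝ) (t : ℝ), 1 ≤ t → (∀ i, 0 ≤ y i) → (∀ i, y i ≤ pmax) →
      (∀ i, x i ≤ t * y i) → ∀ k, I x k ≤ (1 + θ * (t - 1)) * I y k := by
    intro x y t ht hy0 hyle hxy k
    have hGx : (∑ i, coef k i * x i) ≤ t * ∑ i, coef k i * y i := hGmono k x y t hxy
    have hGyC : (∑ i, coef k i * y i) ≤ Cb := hGle k y hy0 hyle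
    have hGy0 : 0 ≤ ∑ i, coef k i * y i := hGnonneg k y hy0
    set Gy : ℝ := ∑ i, coef k i * y i
    have hθG : Gy ≤ θ * (Gy + c k) := by
      rw [hθdef, div_mul_eq_mul_div, le_div_iff₀ hdenpos]
      nlinarith [hcminle k, hc k]
    have hnum : t * Gy + c k ≤ (1 + θ * (t - 1)) * (Gy + c k) := by
      nlinarith [mul_le_mul_of_nonneg_left hθG (sub_nonneg.2 ht)]
    rw [hGI, hGI]
    calc ((∑ i, coef k i * x i) + c k) / b k
        ≤ ((1 + θ * (t - 1)) * (Gy + c k)) / b k :=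
          (div_le_div_iff_of_pos_right (hb k)).mpr (by linarith)
      _ = (1 + θ * (t - 1)) * ((Gy + c k) / b k) := by ring
  -- positivity of the interference map and iterates
  have hIpos : ∀ (x : Fin K → ℝ), (∀ i, 0 ≤ x i) → ∀ k, 0 < I x k := by
    intro x hx k
    rw [hGI]
    exact div_pos (add_pos_of_nonneg_of_pos (hGnonneg k x hx) (hc k)) (hb k)
  have hSpos' : ∀ (x : Fin K → ℝ), (∀ i, 0 ≤ x i) → 0 < ⨆ j, I x j := by
    intro x hx
    obtain ⟨j⟩ := (inferInstance : Nonempty (Fin K))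
    exact lt_of_lt_of_le (hIpos x hx j)
      (le_ciSup (Finite.bddAbove_range fun j => I x j) j)
  have hppos : ∀ n k, 0 < p n k := by
    intro n
    induction n with
    | zero => exact hp0
    | succ n ih =>
      intro k
      rw [hrec]
      exact mul_pos (div_pos hpmax (hSpos' (p n) fun i => (ih i).le))
        (hIpos (p n) (fun i => (ih i).le) k)
  have hSposn : ∀ n, 0 < ⨆ j, I (p n) j := fun n => hSpos' (p n) fun i => (hppos n i).le
  have hple : ∀ n k, p (n + 1) k ≤ pmax := by
    intro n k
    rw [hrec]
    have h1 : I (p n) k ≤ ⨆ j, I (p n) j :=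
      le_ciSup (Finite.bddAbove_range fun j => I (p n) j) k
    calc (pmax / (⨆ j, I (p n) j)) * I (p n) k
        ≤ (pmax / (⨆ j, I (p n) j)) * ⨆ j, I (p n) j :=
          mul_le_mul_of_nonneg_left h1 (div_pos hpmax (hSposn n)).le
      _ = pmax := div_mul_cancel₀ pmax (hSposn n).ne'
  have hattain : ∀ n, ∃ k, p (n + 1) k = pmax := by
    intro n
    obtain ⟨k, hk⟩ := exists_eq_ciSup_of_finite (f := fun j => I (p n) j)
    refine ⟨k, ?_⟩
    rw [hrec, hk]
    exact div_mul_cancel₀ pmax (hSposn n).ne'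
  -- ratio quantities
  set r : (Fin K → ℝ) → (Fin K → ℝ) → ℝ := fun x y => ⨆ k, x k / y k with hrdef
  have hr_bound : ∀ (x y : Fin K → ℝ), (∀ k, 0 < y k) → ∀ k, x k ≤ r x y * y k := by
    intro x y hy k
    have := le_ciSup (Finite.bddAbove_range fun k => x k / y k) k
    exact (div_le_iff₀ (hy k)).mp this
  have hr_ge1 : ∀ (x y : Fin K → ℝ), (∀ k, 0 < y k) → (∀ k, y k ≤ pmax) →
      (∃ k, x k = pmax) → 1 ≤ r x y := by
    intro x y hy hyle ⟨k, hk⟩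
    have h1 : 1 ≤ x k / y k := by
      rw [hk, le_div_iff₀ (hy k)]; linarith [hyle k]
    exact le_trans h1 (le_ciSup (Finite.bddAbove_range fun k => x k / y k) k)
  set t : ℕ → ℝ := fun n => r (p (n + 2)) (p (n + 1)) with htdef
  set s : ℕ → ℝ := fun n => r (p (n + 1)) (p (n + 2)) with hsdef
  have ht1 : ∀ n, 1 ≤ t n := fun n =>
    hr_ge1 _ _ (fun k => hppos (n + 1) k) (fun k => hple n k) (hattain (n + 1))
  have hs1 : ∀ n, 1 ≤ s n := fun n =>
    hr_ge1 _ _ (fun k => hppos (n + 2) k) (fun k => hple (n + 1) k) (hattain n)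
  set D : ℕ → ℝ := fun n => t n * s n - 1 with hDdef
  have hD0 : ∀ n, 0 ≤ D n := by
    intro n
    have := ht1 n; have := hs1 n
    simp only [hDdef]; nlinarith
  -- one step of the contraction
  have hstep : ∀ n, D (n + 1) ≤ θ * D n := by
    intro n
    set S1 : ℝ := ⨆ j, I (p (n + 1)) j with hS1def
    set S2 : ℝ := ⨆ j, I (p (n + 2)) j with hS2def
    have hS1 : 0 < S1 := hSposn (n + 1)
    have hS2 : 0 < S2 := hSposn (n + 2)
    have hIt : ∀ k, I (p (n + 2)) k ≤ (1 + θ * (t n - 1)) * I (p (n + 1)) k :=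
      key _ _ (t n) (ht1 n) (fun i => (hppos (n + 1) i).le) (fun i => hple n i)
        (fun i => hr_bound _ _ (fun k => hppos (n + 1) k) i)
    have hIs : ∀ k, I (p (n + 1)) k ≤ (1 + θ * (s n - 1)) * I (p (n + 2)) k :=
      key _ _ (s n) (hs1 n) (fun i => (hppos (n + 2) i).le) (fun i => hple (n + 1) i)
        (fun i => hr_bound _ _ (fun k => hppos (n + 2) k) i)
    have hIpos1 : ∀ k, 0 < I (p (n + 1)) k := hIpos _ fun i => (hppos (n + 1) i).le
    have hIpos2 : ∀ k, 0 < I (p (n + 2)) k := hIpos _ fun i => (hppos (n + 2) i).le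
    have hκt0 : (0:ℝ) ≤ 1 + θ * (t n - 1) := by nlinarith [ht1 n]
    have hκs0 : (0:ℝ) ≤ 1 + θ * (s n - 1) := by nlinarith [hs1 n]
    have htb : t (n + 1) ≤ S1 / S2 * (1 + θ * (t n - 1)) := by
      refine ciSup_le fun k => ?_
      have hval : p (n + 3) k / p (n + 2) k
          = S1 / S2 * (I (p (n + 2)) k / I (p (n + 1)) k) := by
        rw [hrec (n + 2) k, hrec (n + 1) k]
        rw [← hS1def, ← hS2def]
        field_simp [hpmax.ne', hS1.ne', hS2.ne', (hIpos1 k).ne', (hIpos2 k).ne']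
      rw [hval]
      have h3 : I (p (n + 2)) k / I (p (n + 1)) k ≤ 1 + θ * (t n - 1) :=
        (div_le_iff₀ (hIpos1 k)).mpr (hIt k)
      exact mul_le_mul_of_nonneg_left h3 (div_pos hS1 hS2).le
    have hsb : s (n + 1) ≤ S2 / S1 * (1 + θ * (s n - 1)) := by
      refine ciSup_le fun k => ?_
      have hval : p (n + 2) k / p (n + 3) k
          = S2 / S1 * (I (p (n + 1)) k / I (p (n + 2)) k) := by
        rw [hrec (n + 2) k, hrec (n + 1) k]
        rw [← hS1def, ← hS2def]
        field_simp [hpmax.ne', hS1.ne', hS2.ne', (hIpos1 k).ne', (hIpos2 k).ne']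
      rw [hval]
      have h3 : I (p (n + 1)) k / I (p (n + 2)) k ≤ 1 + θ * (s n - 1) :=
        (div_le_iff₀ (hIpos2 k)).mpr (hIs k)
      exact mul_le_mul_of_nonneg_left h3 (div_pos hS2 hS1).le
    have hprod : t (n + 1) * s (n + 1)
        ≤ (1 + θ * (t n - 1)) * (1 + θ * (s n - 1)) := by
      have hnn : 0 ≤ S1 / S2 * (1 + θ * (t n - 1)) :=
        mul_nonneg (div_nonneg hS1.le hS2.le) hκt0
      have h4 : t (n + 1) * s (n + 1)
          ≤ (S1 / S2 * (1 + θ * (t n - 1))) * (S2 / S1 * (1 + θ * (s n - 1))) :=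
        mul_le_mul htb hsb (by linarith [hs1 (n + 1)]) hnn
      have heq : (S1 / S2 * (1 + θ * (t n - 1))) * (S2 / S1 * (1 + θ * (s n - 1)))
          = (1 + θ * (t n - 1)) * (1 + θ * (s n - 1)) := by
        field_simp
      linarith [heq ▸ h4]
    have hkey2 : θ * θ * ((t n - 1) * (s n - 1)) ≤ θ * ((t n - 1) * (s n - 1)) :=
      mul_le_mul_of_nonneg_right (by nlinarith [hθ0, hθ1.le])
        (mul_nonneg (sub_nonneg.2 (ht1 n)) (sub_nonneg.2 (hs1 n)))
    simp only [hDdef]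
    nlinarith [hprod, hkey2]
  have hDgeo : ∀ n, D n ≤ D 0 * θ ^ n := by
    intro n
    induction n with
    | zero => simp
    | succ n ih =>
      calc D (n + 1) ≤ θ * D n := hstep n
        _ ≤ θ * (D 0 * θ ^ n) := mul_le_mul_of_nonneg_left ih hθ0
        _ = D 0 * θ ^ (n + 1) := by ring
  -- geometric bound on successive distances
  have hdist : ∀ n k, dist (p (n + 1) k) (p (n + 2) k) ≤ (pmax * D 0) * θ ^ n := by
    intro n k
    have h1 : p (n + 2) k ≤ t n * p (n + 1) k :=
      hr_bound _ _ (fun j => hppos (n + 1) j) k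
    have h2 : p (n + 1) k ≤ s n * p (n + 2) k :=
      hr_bound _ _ (fun j => hppos (n + 2) j) k
    have hx1 : p (n + 1) k ≤ pmax := hple n k
    have hx2 : p (n + 2) k ≤ pmax := hple (n + 1) k
    have hx1p : 0 < p (n + 1) k := hppos (n + 1) k
    have hx2p : 0 < p (n + 2) k := hppos (n + 2) k
    have hDb : dist (p (n + 1) k) (p (n + 2) k) ≤ pmax * D n := by
      rw [Real.dist_eq, abs_sub_le_iff]
      constructor
      · -- p (n+1) k - p (n+2) k ≤ (s n - 1) * p (n+2) k ≤ pmax * D n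
        have : p (n + 1) k - p (n + 2) k ≤ (s n - 1) * p (n + 2) k := by linarith
        have h5 : (s n - 1) * p (n + 2) k ≤ (s n - 1) * pmax :=
          mul_le_mul_of_nonneg_left hx2 (by linarith [hs1 n])
        have h6 : s n - 1 ≤ D n := by
          have h7 : 0 ≤ t n * (s n - 1) :=
            mul_nonneg (le_trans zero_le_one (ht1 n)) (sub_nonneg.2 (hs1 n))
          simp only [hDdef]
          nlinarith [h7, ht1 n]
        have h8 := mul_le_mul_of_nonneg_right h6 hpmax.le
        nlinarith [hD0 n, h8]
      · have : p (n + 2) k - p (n + 1) k ≤ (t n - 1) * p (n + 1) k := by linarith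
        have h5 : (t n - 1) * p (n + 1) k ≤ (t n - 1) * pmax :=
          mul_le_mul_of_nonneg_left hx1 (by linarith [ht1 n])
        have h6 : t n - 1 ≤ D n := by
          have h7 : 0 ≤ t n * (s n - 1) :=
            mul_nonneg (le_trans zero_le_one (ht1 n)) (sub_nonneg.2 (hs1 n))
          simp only [hDdef]
          nlinarith [h7, hs1 n]
        have h8 := mul_le_mul_of_nonneg_right h6 hpmax.le
        nlinarith [hD0 n, h8]
    calc dist (p (n + 1) k) (p (n + 2) k) ≤ pmax * D n := hDb
      _ ≤ pmax * (D 0 * θ ^ n) := mul_le_mul_of_nonneg_left (hDgeo n) hpmax.le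
      _ = (pmax * D 0) * θ ^ n := by ring
  -- convergence
  have hconv : ∀ k, ∃ L, Tendsto (fun n => p n k) atTop (nhds L) := by
    intro k
    have hcauchy : CauchySeq (fun n => p (n + 1) k) :=
      cauchySeq_of_le_geometric θ (pmax * D 0) hθ1 (fun n => hdist n k)
    obtain ⟨L, hL⟩ := cauchySeq_tendsto_of_complete hcauchy
    exact ⟨L, (tendsto_add_atTop_iff_nat 1).mp hL⟩
  choose pstar hpstar using hconv
  have hpstar0 : ∀ k, 0 ≤ pstar k := fun k =>
    ge_of_tendsto' (hpstar k) fun n => (hppos n k).le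
  -- limits of I and of the normalization constant
  have hlimI : ∀ k, Tendsto (fun n => I (p n) k) atTop (nhds (I pstar k)) := by
    intro k
    simp only [hGI]
    exact ((tendsto_finset_sum _ fun i _ =>
      (hpstar i).const_mul (coef k i)).add_const (c k)).div_const (b k)
  set Sstar : ℝ := ⨆ j, I pstar j with hSstardef
  have hSstarpos : 0 < Sstar := hSpos' pstar hpstar0
  have hlimS : Tendsto (fun n => ⨆ j, I (p n) j) atTop (nhds Sstar) :=
    aux_tendsto_ciSup (fun n j => I (p n) j) (fun j => I pstar j) hlimI
  set lam : ℝ := pmax / Sstar with hlamdef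
  have hlampos : 0 < lam := div_pos hpmax hSstarpos
  have hfix : ∀ k, pstar k = lam * I pstar k := by
    intro k
    have h1 : Tendsto (fun n => p (n + 1) k) atTop (nhds (pstar k)) :=
      (tendsto_add_atTop_iff_nat 1).mpr (hpstar k)
    have h2 : Tendsto (fun n => (pmax / (⨆ j, I (p n) j)) * I (p n) k) atTop
        (nhds (lam * I pstar k)) :=
      (tendsto_const_nhds.div hlimS hSstarpos.ne').mul (hlimI k)
    have h3 : (fun n => p (n + 1) k) = fun n => (pmax / (⨆ j, I (p n) j)) * I (p n) k :=
      funext fun n => hrec n k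
    rw [h3] at h1
    exact tendsto_nhds_unique h1 h2
  have hIpstar : ∀ k, 0 < I pstar k := hIpos pstar hpstar0
  have hpstarpos : ∀ k, 0 < pstar k := fun k => by
    rw [hfix k]; exact mul_pos hlampos (hIpstar k)
  have hpstarle : ∀ k, pstar k ≤ pmax := by
    intro k
    rw [hfix k]
    calc lam * I pstar k ≤ lam * Sstar :=
          mul_le_mul_of_nonneg_left
            (le_ciSup (Finite.bddAbove_range fun j => I pstar j) k) hlampos.le
      _ = pmax := div_mul_cancel₀ pmax hSstarpos.ne'
  have hmaxattain : ∃ j, pstar j = pmax := by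
    obtain ⟨j, hj⟩ := exists_eq_ciSup_of_finite (f := fun j => I pstar j)
    refine ⟨j, ?_⟩
    rw [hfix j, show I pstar j = Sstar from hj]
    exact div_mul_cancel₀ pmax hSstarpos.ne'
  -- value of SINR at the fixed point
  have hden : ∀ (x : Fin K → ℝ) k,
      (∑ i, a k i * x i) - b k * x k + c k = b k * I x k := by
    intro x k
    rw [hI]
    field_simp
    rw [mul_div_cancel_left₀ _ (hb k).ne']
  have hSINRstar : ∀ k, SINR pstar k = lam := by
    intro k
    rw [hS, hden, hfix k]
    rw [div_eq_iff (mul_pos (hb k) (hIpstar k)).ne']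
    ring
  have hinfstar : (⨅ k, SINR pstar k) = lam := by
    simp only [hSINRstar, ciInf_const]
  refine ⟨pstar, hpstar, fun k => ⟨(hpstarpos k).le, hpstarle k⟩, ?_⟩
  -- optimality
  intro q hq
  rw [hinfstar]
  by_contra hcon
  push_neg at hcon
  have hqk : ∀ k, lam * I q k < q k := by
    intro k
    have h1 : lam < SINR q k :=
      lt_of_lt_of_le hcon (ciInf_le (Finite.bddBelow_range fun k => SINR q k) k)
    have hIq : 0 < I q k := hIpos q (fun i => (hq i).1) k
    rw [hS, hden] at h1
    have h3 : b k * q k / (b k * I q k) = q k / I q k := by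
      rw [mul_div_mul_left _ _ (hb k).ne']
    rw [h3] at h1
    exact (lt_div_iff₀ hIq).mp h1
  have hqpos : ∀ k, 0 < q k := by
    intro k
    have hIq : 0 < I q k := hIpos q (fun i => (hq i).1) k
    nlinarith [hqk k]
  set μ : ℝ := ⨆ k, pstar k / q k with hμdef
  have hμle : ∀ k, pstar k ≤ μ * q k := by
    intro k
    have := le_ciSup (Finite.bddAbove_range fun k => pstar k / q k) k
    exact (div_le_iff₀ (hqpos k)).mp this
  obtain ⟨k0, hk0⟩ := exists_eq_ciSup_of_finite (f := fun k => pstar k / q k)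
  have hμpos : 0 < μ := by
    rw [hμdef, ← hk0]
    exact div_pos (hpstarpos k0) (hqpos k0)
  have hμeq : pstar k0 = μ * q k0 := by
    have h : pstar k0 / q k0 = μ := hk0
    rw [div_eq_iff (hqpos k0).ne'] at h
    linarith
  rcases le_or_gt 1 μ with hμ1 | hμ1
  · -- μ ≥ 1 : contradiction at k0
    have hGm : (∑ i, coef k0 i * pstar i) ≤ μ * ∑ i, coef k0 i * q i :=
      hGmono k0 pstar q μ hμle
    have hImono : I pstar k0 ≤ μ * I q k0 := by
      rw [hGI, hGI]
      rw [div_le_iff₀ (hb k0)]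
      have heq : μ * (((∑ i, coef k0 i * q i) + c k0) / b k0) * b k0
          = μ * ((∑ i, coef k0 i * q i) + c k0) := by
        rw [mul_assoc, div_mul_cancel₀ _ (hb k0).ne']
      rw [heq]
      nlinarith [hGm, hc k0]
    have h5 : pstar k0 ≤ μ * (lam * I q k0) := by
      rw [hfix k0]
      calc lam * I pstar k0 ≤ lam * (μ * I q k0) :=
            mul_le_mul_of_nonneg_left hImono hlampos.le
        _ = μ * (lam * I q k0) := by ring
    have h6 : μ * (lam * I q k0) < μ * q k0 :=
      mul_lt_mul_of_pos_left (hqk k0) hμpos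
    linarith [hμeq ▸ h5]
  · -- μ < 1 : contradiction at the max of pstar
    obtain ⟨j, hj⟩ := hmaxattain
    have h1 : pstar j ≤ μ * q j := hμle j
    have h2 : μ * q j < q j := by nlinarith [hqpos j]
    have h3 : q j ≤ pmax := (hq j).2
    rw [hj] at h1
    linarith
end
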